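/- Let n ≥ 2 and let f : ℝ^n → [0,∞) be measurable and vanishing at infinity. Let w : ℝ^n → ℝ be of the form w(ξ₁, ξ') = W(ξ₁, |ξ'|) for (ξ₁, ξ') ∈ ℝ × ℝ^{n-1}, where for each fixed ξ₁ ∈ ℝ the map r ↦ W(ξ₁, r) is continuous and strictly increasing on [0,∞). Assume that f·w and f^{*₁}·w are integrable on ℝ^n. Then ∫_{ℝ^n} f^{*₁}(ξ) w(ξ) dξ ≤ ∫_{ℝ^n} f(ξ) w(ξ) dξ. -/

import Mathlib

noncomputable section

open MeasureTheory Filter Metric Real Classical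
open scoped ENNReal Topology Pointwise RealInnerProductSpace ComplexConjugate

/-- `ℝⁿ` with its Euclidean structure. -/
abbrev Euc (n : ℕ) : Type := EuclideanSpace ℝ (Fin n)

/-- The open ball centered at the origin with the same volume as `A`. -/
def setRearr {k : ℕ} (A : Set (Euc k)) : Set (Euc k) :=
  ball (0 : Euc k) (((volume A).toReal / (volume (ball (0 : Euc k) 1)).toReal) ^ ((k : ℝ)⁻¹))

/-- The symmetric-decreasing rearrangement `f*(x) = ∫₀^∞ χ_{{|f|>t}*}(x) dt` of `f`. -/
def symmRearr {k : ℕ} {α : Type*} [NormedAddCommGroup α] (f : Euc k → α) : Euc k → ℝ :=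
  fun x =>
    (∫⁻ t in Set.Ioi (0 : ℝ), (setRearr {y | t < ‖f y‖}).indicator (fun _ => (1 : ℝ≥0∞)) x).toReal

/-- Steiner symmetrization in `n-1` codimensions with respect to the first coordinate
direction: symmetric-decreasing rearrangement in the hyperplanes `{x₁} × ℝ^{n-1}`. -/
def steiner1 {m : ℕ} {α : Type*} [NormedAddCommGroup α] (u : Euc (m + 1) → α) :
    Euc (m + 1) → ℝ := fun x =>
  symmRearr (fun y : Euc m => u (show Euc (m + 1) from WithLp.toLp 2 (Fin.cons (x 0) (fun j => y j) : Fin (m + 1) → ℝ)))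
    (show Euc m from WithLp.toLp 2 (fun j => x j.succ))

/-- Steiner symmetrization in `n-1` codimensions with respect to the direction `e = R⁻¹ e₁`,
where `R ∈ O(n)` is an orthogonal map sending `e` to the first coordinate vector `e₁`:
`u^{*_e} = R⁻¹ ((R u)^{*₁})`. -/
def steinerE {m : ℕ} {α : Type*} [NormedAddCommGroup α]
    (R : Euc (m + 2) ≃ₗᵢ[ℝ] Euc (m + 2)) (u : Euc (m + 2) → α) : Euc (m + 2) → ℝ :=
  fun x => steiner1 (fun y => u (R.symm y)) (R x)

/-- A function vanishes at infinity if all its superlevel sets have finite measure. -/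
def VanishAtInfty {k : ℕ} {α : Type*} [NormedAddCommGroup α] (f : Euc k → α) : Prop :=
  ∀ t : ℝ, 0 < t → volume {x | t < ‖f x‖} < ⊤

section Sets

variable {k : ℕ}

lemma omega_pos : 0 < volume (ball (0 : Euc (k+1)) 1) :=
  measure_ball_pos _ _ one_pos

lemma omega_lt_top : volume (ball (0 : Euc (k+1)) 1) < ⊤ :=
  measure_ball_lt_top

lemma omega_toReal_pos : 0 < (volume (ball (0 : Euc (k+1)) 1)).toReal :=
  ENNReal.toReal_pos omega_pos.ne' omega_lt_top.ne

/-- The radius of `setRearr A` is nonnegative. -/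
lemma setRearr_radius_nonneg (A : Set (Euc (k+1))) :
    0 ≤ ((volume A).toReal / (volume (ball (0 : Euc (k+1)) 1)).toReal) ^ (((k+1 : ℕ) : ℝ)⁻¹) :=
  Real.rpow_nonneg (div_nonneg ENNReal.toReal_nonneg ENNReal.toReal_nonneg) _

lemma volume_setRearr (A : Set (Euc (k+1))) (hA : volume A < ⊤) :
    volume (setRearr A) = volume A := by
  rw [setRearr, Measure.addHaar_ball _ _ (setRearr_radius_nonneg A)]
  rw [← Real.rpow_natCast (((volume A).toReal / _) ^ _) (Module.finrank ℝ (Euc (k+1)))]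
  rw [← Real.rpow_mul (div_nonneg ENNReal.toReal_nonneg ENNReal.toReal_nonneg)]
  rw [finrank_euclideanSpace_fin]
  rw [inv_mul_cancel₀ (by positivity : ((k+1:ℕ):ℝ) ≠ 0), Real.rpow_one]
  rw [ENNReal.ofReal_div_of_pos omega_toReal_pos, ENNReal.ofReal_toReal hA.ne,
    ENNReal.ofReal_toReal omega_lt_top.ne]
  rw [ENNReal.div_mul_cancel omega_pos.ne' omega_lt_top.ne]

/-- A set closed downward under the norm. -/
def NormClosed {j : ℕ} (B : Set (Euc j)) : Prop :=
  ∀ x ∈ B, ∀ y : Euc j, ‖y‖ ≤ ‖x‖ → y ∈ B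

lemma measure_inter_le_setRearr_inter {A B : Set (Euc (k+1))} (hA : volume A < ⊤)
    (hB : NormClosed B) : volume (A ∩ B) ≤ volume (setRearr A ∩ B) := by
  by_cases hsub : setRearr A ⊆ B
  · rw [Set.inter_eq_left.mpr hsub, volume_setRearr A hA]
    exact measure_mono Set.inter_subset_left
  · obtain ⟨y, hy, hyB⟩ := Set.not_subset.mp hsub
    have hBsub : B ⊆ setRearr A := by
      intro z hz
      have hzy : ‖z‖ < ‖y‖ := by
        by_contra h
        exact hyB (hB z hz y (not_lt.mp h))
      rw [setRearr, mem_ball_zero_iff] at hy ⊢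
      exact hzy.trans hy
    rw [Set.inter_eq_right.mpr hBsub]
    exact measure_mono Set.inter_subset_right

lemma setRearr_inter_compl_le {A B : Set (Euc (k+1))} (hA : volume A < ⊤)
    (hB : NormClosed B) (hBm : MeasurableSet B) :
    volume (setRearr A ∩ Bᶜ) ≤ volume (A ∩ Bᶜ) := by
  have key : volume (setRearr A ∩ Bᶜ) + volume (A ∩ B) ≤
      volume (A ∩ Bᶜ) + volume (A ∩ B) := by
    calc volume (setRearr A ∩ Bᶜ) + volume (A ∩ B)
        ≤ volume (setRearr A ∩ Bᶜ) + volume (setRearr A ∩ B) :=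
          add_le_add_right (measure_inter_le_setRearr_inter hA hB) _
      _ = volume (setRearr A) := by
          rw [add_comm, ← measure_inter_add_diff (setRearr A) hBm, Set.diff_eq]
      _ = volume A := volume_setRearr A hA
      _ = volume (A ∩ B) + volume (A ∩ Bᶜ) := by
          rw [← measure_inter_add_diff A hBm, Set.diff_eq]
      _ = volume (A ∩ Bᶜ) + volume (A ∩ B) := add_comm _ _
  exact ENNReal.le_of_add_le_add_right
    ((measure_mono Set.inter_subset_left).trans_lt hA).ne key

end Sets

section Rearr
variable {k : ℕ}

/-- The radius of the rearranged level set. -/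
def rad (g : Euc (k+1) → ℝ) (t : ℝ) : ℝ :=
  ((volume {y | t < g y}).toReal / (volume (ball (0 : Euc (k+1)) 1)).toReal) ^ (((k+1 : ℕ) : ℝ)⁻¹)

lemma setRearr_lev (g : Euc (k+1) → ℝ) (t : ℝ) :
    setRearr {y | t < g y} = ball (0 : Euc (k+1)) (rad g t) := rfl

variable {g : Euc (k+1) → ℝ}

lemma lev_norm_eq (hg0 : ∀ y, 0 ≤ g y) (t : ℝ) :
    {y | t < ‖g y‖} = {y | t < g y} := by
  ext y; simp [Real.norm_eq_abs, abs_of_nonneg (hg0 y)]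

lemma meas_lev_antitone : Antitone fun t => volume {y | t < g y} := fun s t hst =>
  measure_mono fun y hy => lt_of_le_of_lt hst hy

lemma rad_measurable : Measurable (rad g) := by
  exact (continuous_rpow_const (by positivity)).measurable.comp
    (((Antitone.measurable meas_lev_antitone).ennreal_toReal).div_const _)

lemma rad_antitone (hgv : ∀ t : ℝ, 0 < t → volume {y | t < g y} < ⊤)
    {s t : ℝ} (hs : 0 < s) (hst : s ≤ t) : rad g t ≤ rad g s := by
  apply Real.rpow_le_rpow (div_nonneg ENNReal.toReal_nonneg ENNReal.toReal_nonneg)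
    _ (by positivity)
  have hw : 0 < (volume (ball (0 : Euc (k+1)) 1)).toReal :=
    ENNReal.toReal_pos (measure_ball_pos _ _ one_pos).ne' measure_ball_lt_top.ne
  exact div_le_div_of_nonneg_right
    (ENNReal.toReal_mono (hgv s hs).ne (meas_lev_antitone hst)) hw.le

lemma symmRearr_eq' (hg0 : ∀ y, 0 ≤ g y) (x : Euc (k+1)) :
    symmRearr g x
      = (∫⁻ t in Set.Ioi (0:ℝ), if ‖x‖ < rad g t then (1:ℝ≥0∞) else 0).toReal := by
  unfold symmRearr
  congr 1
  apply lintegral_congr fun t => ?_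
  rw [lev_norm_eq hg0, setRearr_lev, Set.indicator_apply]
  simp [mem_ball_zero_iff]

lemma symmRearr_eq (hg0 : ∀ y, 0 ≤ g y) (x : Euc (k+1)) :
    symmRearr g x = (volume ({t | ‖x‖ < rad g t} ∩ Set.Ioi (0:ℝ))).toReal := by
  rw [symmRearr_eq' hg0 x]
  congr 1
  have hmeas : MeasurableSet {t : ℝ | ‖x‖ < rad g t} :=
    measurableSet_lt measurable_const rad_measurable
  calc ∫⁻ t in Set.Ioi (0:ℝ), (if ‖x‖ < rad g t then (1:ℝ≥0∞) else 0)
      = ∫⁻ t in Set.Ioi (0:ℝ), {t : ℝ | ‖x‖ < rad g t}.indicator (fun _ => (1:ℝ≥0∞)) t := by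
        apply lintegral_congr fun t => ?_
        rw [Set.indicator_apply]; rfl
    _ = ∫⁻ t in {t : ℝ | ‖x‖ < rad g t} ∩ Set.Ioi (0:ℝ), (1:ℝ≥0∞) := by
        rw [lintegral_indicator hmeas, Measure.restrict_restrict hmeas]
    _ = volume ({t | ‖x‖ < rad g t} ∩ Set.Ioi (0:ℝ)) := by
        rw [setLIntegral_one]

lemma symmRearr_nonneg (x : Euc (k+1)) : 0 ≤ symmRearr g x := ENNReal.toReal_nonneg

lemma symmRearr_measurable (hg0 : ∀ y, 0 ≤ g y) : Measurable (symmRearr g) := by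
  have : symmRearr g = fun x =>
      (∫⁻ t in Set.Ioi (0:ℝ), if ‖x‖ < rad g t then (1:ℝ≥0∞) else 0).toReal :=
    funext (symmRearr_eq' hg0)
  rw [this]
  apply Measurable.ennreal_toReal
  apply Measurable.lintegral_prod_right' (f := fun p : Euc (k+1) × ℝ =>
    if ‖p.1‖ < rad g p.2 then (1:ℝ≥0∞) else 0)
  apply Measurable.ite ?_ measurable_const measurable_const
  exact measurableSet_lt (measurable_fst.norm) (rad_measurable.comp measurable_snd)

end Rearr

section Rearr2
variable {k : ℕ} {g : Euc (k+1) → ℝ}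

lemma symmRearr_lintegral_finite (hgm : Measurable g)
    (hgv : ∀ t : ℝ, 0 < t → volume {y | t < g y} < ⊤) {x : Euc (k+1)} (hx : x ≠ 0) :
    volume ({t | ‖x‖ < rad g t} ∩ Set.Ioi (0:ℝ)) < ⊤ := by
  have hxpos : 0 < ‖x‖ := norm_pos_iff.mpr hx
  have hε : 0 < volume (ball (0 : Euc (k+1)) ‖x‖) := measure_ball_pos _ _ hxpos
  have htend : Tendsto (fun n : ℕ => volume {y | ((n:ℝ)+1) < g y}) atTop (𝓝 0) := by
    have h0 : (⋂ n : ℕ, {y : Euc (k+1) | ((n:ℝ)+1) < g y}) = ∅ := by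
      ext y
      simp only [Set.mem_iInter, Set.mem_setOf_eq, Set.mem_empty_iff_false, iff_false, not_forall]
      obtain ⟨n, hn⟩ := exists_nat_ge (g y)
      exact ⟨n, by push_neg; linarith⟩
    have := tendsto_measure_iInter_atTop
      (μ := volume) (s := fun n : ℕ => {y : Euc (k+1) | ((n:ℝ)+1) < g y})
      (fun n => (measurableSet_lt measurable_const hgm).nullMeasurableSet)
      (fun a b hab y hy => by
        simp only [Set.mem_setOf_eq] at hy ⊢
        have : (a:ℝ) ≤ (b:ℝ) := Nat.cast_le.mpr hab
        linarith)
      ⟨0, (by simpa using (hgv 1 one_pos).ne)⟩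
    rwa [h0, measure_empty] at this
  obtain ⟨n, hn⟩ : ∃ n : ℕ, volume {y | ((n:ℝ)+1) < g y} < volume (ball (0 : Euc (k+1)) ‖x‖) := by
    have := htend.eventually_lt_const hε
    exact this.exists
  have hrad : rad g ((n:ℝ)+1) ≤ ‖x‖ := by
    by_contra h
    push_neg at h
    have hsub : ball (0 : Euc (k+1)) ‖x‖ ⊆ setRearr {y | ((n:ℝ)+1) < g y} := by
      rw [setRearr_lev]
      exact ball_subset_ball h.le
    have := (measure_mono hsub).trans_eq
      (volume_setRearr _ (hgv _ (by positivity)))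
    exact absurd hn (not_lt.mpr this)
  have hsub : {t | ‖x‖ < rad g t} ∩ Set.Ioi (0:ℝ) ⊆ Set.Ioc 0 ((n:ℝ)+1) := by
    rintro t ⟨ht1, ht2⟩
    refine ⟨ht2, ?_⟩
    by_contra h
    push_neg at h
    have : rad g t ≤ rad g ((n:ℝ)+1) := rad_antitone hgv (by positivity) h.le
    exact absurd ht1 (not_lt.mpr (this.trans hrad))
  calc volume ({t | ‖x‖ < rad g t} ∩ Set.Ioi (0:ℝ)) ≤ volume (Set.Ioc (0:ℝ) ((n:ℝ)+1)) :=
        measure_mono hsub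
    _ < ⊤ := by rw [Real.volume_Ioc]; exact ENNReal.ofReal_lt_top

lemma le_symmRearr (hgm : Measurable g) (hg0 : ∀ y, 0 ≤ g y)
    (hgv : ∀ t : ℝ, 0 < t → volume {y | t < g y} < ⊤) {t : ℝ} (ht : 0 < t)
    {x : Euc (k+1)} (hx : x ≠ 0) (hxt : ‖x‖ < rad g t) : t ≤ symmRearr g x := by
  rw [symmRearr_eq hg0]
  have hsub : Set.Ioc (0:ℝ) t ⊆ {t' | ‖x‖ < rad g t'} ∩ Set.Ioi (0:ℝ) := by
    rintro s ⟨hs1, hs2⟩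
    exact ⟨lt_of_lt_of_le hxt (rad_antitone hgv hs1 hs2), hs1⟩
  have := ENNReal.toReal_mono (symmRearr_lintegral_finite hgm hgv hx).ne (measure_mono hsub)
  rwa [Real.volume_Ioc, sub_zero, ENNReal.toReal_ofReal ht.le] at this

lemma symmRearr_level_subset (hg0 : ∀ y, 0 ≤ g y)
    (hgv : ∀ t : ℝ, 0 < t → volume {y | t < g y} < ⊤) {t : ℝ} (ht : 0 < t) :
    {x : Euc (k+1) | t < symmRearr g x} ⊆ ball (0 : Euc (k+1)) (rad g t) := by
  intro x hx
  rw [Set.mem_setOf_eq, symmRearr_eq hg0] at hx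
  rw [mem_ball_zero_iff]
  by_contra h
  push_neg at h
  have hsub : {t' | ‖x‖ < rad g t'} ∩ Set.Ioi (0:ℝ) ⊆ Set.Ioc 0 t := by
    rintro s ⟨hs1, hs2⟩
    refine ⟨hs2, ?_⟩
    by_contra hst
    push_neg at hst
    exact absurd hs1 (not_lt.mpr ((rad_antitone hgv ht hst.le).trans h))
  have := ENNReal.toReal_mono (by rw [Real.volume_Ioc]; exact ENNReal.ofReal_ne_top)
    (measure_mono hsub)
  rw [Real.volume_Ioc, sub_zero, ENNReal.toReal_ofReal ht.le] at this
  exact absurd hx (not_lt.mpr this)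

end Rearr2

section Layer
variable {k : ℕ} {g : Euc (k+1) → ℝ}

/-- Restricted layer-cake with strict inequality level sets. -/
lemma setLayercake_lt {h : Euc (k+1) → ℝ} (hm : Measurable h) (h0 : ∀ x, 0 ≤ h x)
    {S : Set (Euc (k+1))} (hS : MeasurableSet S) :
    ∫⁻ x in S, ENNReal.ofReal (h x) = ∫⁻ t in Set.Ioi (0:ℝ), volume ({x | t < h x} ∩ S) := by
  rw [lintegral_eq_lintegral_meas_lt (volume.restrict S)
    (Eventually.of_forall h0) hm.aemeasurable]
  apply lintegral_congr fun t => ?_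
  rw [Measure.restrict_apply (measurableSet_lt measurable_const hm)]

/-- Restricted layer-cake with weak inequality level sets. -/
lemma setLayercake_le {h : Euc (k+1) → ℝ} (hm : Measurable h) (h0 : ∀ x, 0 ≤ h x)
    {S : Set (Euc (k+1))} (hS : MeasurableSet S) :
    ∫⁻ x in S, ENNReal.ofReal (h x) = ∫⁻ t in Set.Ioi (0:ℝ), volume ({x | t ≤ h x} ∩ S) := by
  rw [lintegral_eq_lintegral_meas_le (volume.restrict S)
    (Eventually.of_forall h0) hm.aemeasurable]
  apply lintegral_congr fun t => ?_
  rw [Measure.restrict_apply (measurableSet_le measurable_const hm)]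

/-- On a norm-downward-closed set, the rearrangement has larger integral. -/
lemma lintegral_le_on_normClosed (hgm : Measurable g) (hg0 : ∀ y, 0 ≤ g y)
    (hgv : ∀ t : ℝ, 0 < t → volume {y | t < g y} < ⊤)
    {B : Set (Euc (k+1))} (hB : NormClosed B) (hBm : MeasurableSet B) :
    ∫⁻ x in B, ENNReal.ofReal (g x) ≤ ∫⁻ x in B, ENNReal.ofReal (symmRearr g x) := by
  rw [setLayercake_lt hgm hg0 hBm, setLayercake_le (symmRearr_measurable hg0)
    (fun x => symmRearr_nonneg x) hBm]
  apply setLIntegral_mono' measurableSet_Ioi fun t ht => ?_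
  rw [Set.mem_Ioi] at ht
  calc volume ({x | t < g x} ∩ B) ≤ volume (setRearr {x | t < g x} ∩ B) :=
        measure_inter_le_setRearr_inter (hgv t ht) hB
    _ = volume ((setRearr {x | t < g x} ∩ B) \ {0}) :=
        (measure_diff_null (measure_singleton 0)).symm
    _ ≤ volume ({x | t ≤ symmRearr g x} ∩ B) := by
        apply measure_mono
        rintro x ⟨⟨hx1, hx2⟩, hx0⟩
        rw [Set.mem_singleton_iff] at hx0
        rw [setRearr_lev, mem_ball_zero_iff] at hx1
        exact ⟨le_symmRearr hgm hg0 hgv ht hx0 hx1, hx2⟩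

/-- On the complement of a norm-downward-closed set, the rearrangement has smaller integral. -/
lemma lintegral_le_on_compl_normClosed (hgm : Measurable g) (hg0 : ∀ y, 0 ≤ g y)
    (hgv : ∀ t : ℝ, 0 < t → volume {y | t < g y} < ⊤)
    {B : Set (Euc (k+1))} (hB : NormClosed B) (hBm : MeasurableSet B) :
    ∫⁻ x in Bᶜ, ENNReal.ofReal (symmRearr g x) ≤ ∫⁻ x in Bᶜ, ENNReal.ofReal (g x) := by
  rw [setLayercake_lt hgm hg0 hBm.compl, setLayercake_lt (symmRearr_measurable hg0)
    (fun x => symmRearr_nonneg x) hBm.compl]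
  apply setLIntegral_mono' measurableSet_Ioi fun t ht => ?_
  rw [Set.mem_Ioi] at ht
  calc volume ({x | t < symmRearr g x} ∩ Bᶜ)
      ≤ volume (setRearr {x | t < g x} ∩ Bᶜ) := by
        apply measure_mono (Set.inter_subset_inter_left _ ?_)
        rw [setRearr_lev]
        exact symmRearr_level_subset hg0 hgv ht
    _ ≤ volume ({x | t < g x} ∩ Bᶜ) := setRearr_inter_compl_le (hgv t ht) hB hBm

end Layer

section Slice
variable {k : ℕ}

/-- Layer a weight: `∫ H(x) (v(x))₊ dx = ∫_{s>0} ∫_{v>s} H`. -/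
lemma lintegral_mul_ofReal_weight {H : Euc (k+1) → ℝ≥0∞} (hH : Measurable H)
    {v : Euc (k+1) → ℝ} (hv : Measurable v) :
    ∫⁻ x, H x * ENNReal.ofReal (v x) =
      ∫⁻ s in Set.Ioi (0:ℝ), ∫⁻ x in {x | s < v x}, H x := by
  have step1 : ∀ x, H x * ENNReal.ofReal (v x)
      = ∫⁻ s in Set.Ioi (0:ℝ), H x * (if s < v x then 1 else 0) := by
    intro x
    rw [lintegral_const_mul _ (by
      apply Measurable.ite ?_ measurable_const measurable_const
      exact measurableSet_lt measurable_id measurable_const)]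
    congr 1
    symm
    calc ∫⁻ s in Set.Ioi (0:ℝ), (if s < v x then (1:ℝ≥0∞) else 0)
        = ∫⁻ s in Set.Ioi (0:ℝ), (Set.Iio (v x)).indicator (fun _ => (1:ℝ≥0∞)) s := by
          apply lintegral_congr fun s => ?_
          rw [Set.indicator_apply]; rfl
      _ = volume (Set.Iio (v x) ∩ Set.Ioi 0) := by
          rw [lintegral_indicator measurableSet_Iio, Measure.restrict_restrict measurableSet_Iio,
            setLIntegral_one]
      _ = ENNReal.ofReal (v x) := by
          rw [Set.Iio_inter_Ioi, Real.volume_Ioo, sub_zero]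
  simp_rw [step1]
  rw [lintegral_lintegral_swap]
  · apply lintegral_congr fun s => ?_
    calc ∫⁻ x, H x * (if s < v x then 1 else 0)
        = ∫⁻ x, {x | s < v x}.indicator H x := by
          apply lintegral_congr fun x => ?_
          rw [Set.indicator_apply]
          by_cases h : s < v x <;> simp [h]
      _ = ∫⁻ x in {x | s < v x}, H x :=
          lintegral_indicator (measurableSet_lt measurable_const hv) _
  · apply Measurable.aemeasurable
    apply Measurable.mul (hH.comp measurable_fst)
    apply Measurable.ite ?_ measurable_const measurable_const
    exact measurableSet_lt measurable_snd (hv.comp measurable_fst)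

/-- The key one-slice inequality: symmetrization decreases the integral against a
radially increasing weight. -/
theorem slice_ineq {g : Euc (k+1) → ℝ} (hgm : Measurable g) (hg0 : ∀ y, 0 ≤ g y)
    (hgv : ∀ t : ℝ, 0 < t → volume {y | t < g y} < ⊤)
    {V : ℝ → ℝ} (hVm : MonotoneOn V (Set.Ici 0)) (hVc : ContinuousOn V (Set.Ici 0))
    (hi : Integrable (fun y => g y * V ‖y‖) volume)
    (hi' : Integrable (fun y => symmRearr g y * V ‖y‖) volume) :
    ∫ y, symmRearr g y * V ‖y‖ ≤ ∫ y, g y * V ‖y‖ := by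
  set v : Euc (k+1) → ℝ := fun y => V ‖y‖ with hv_def
  have hvc : Continuous v := hVc.comp_continuous continuous_norm fun x => norm_nonneg x
  have hvm : Measurable v := hvc.measurable
  have hgsm : Measurable (symmRearr g) := symmRearr_measurable hg0
  -- the four lintegrals
  set P : ℝ≥0∞ := ∫⁻ x, ENNReal.ofReal (g x) * ENNReal.ofReal (v x) with hP_def
  set N : ℝ≥0∞ := ∫⁻ x, ENNReal.ofReal (g x) * ENNReal.ofReal (-v x) with hN_def
  set P' : ℝ≥0∞ := ∫⁻ x, ENNReal.ofReal (symmRearr g x) * ENNReal.ofReal (v x) with hP'_def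
  set N' : ℝ≥0∞ := ∫⁻ x, ENNReal.ofReal (symmRearr g x) * ENNReal.ofReal (-v x) with hN'_def
  -- ofReal products
  have hofReal : ∀ a b : ℝ, 0 ≤ a → ENNReal.ofReal (a * b)
      = ENNReal.ofReal a * ENNReal.ofReal b := by
    intro a b ha
    rcases le_or_gt 0 b with hb | hb
    · exact ENNReal.ofReal_mul ha
    · rw [ENNReal.ofReal_of_nonpos (mul_nonpos_of_nonneg_of_nonpos ha hb.le),
        ENNReal.ofReal_of_nonpos hb.le, mul_zero]
  -- main comparisons
  have hPP : P' ≤ P := by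
    rw [hP_def, hP'_def, lintegral_mul_ofReal_weight (hgm.ennreal_ofReal) hvm,
      lintegral_mul_ofReal_weight (hgsm.ennreal_ofReal) hvm]
    apply setLIntegral_mono' measurableSet_Ioi fun s _ => ?_
    have hB : NormClosed {x : Euc (k+1) | v x ≤ s} := by
      intro x hx y hy
      exact le_trans (hVm (norm_nonneg y) (norm_nonneg x) hy) hx
    have hBm : MeasurableSet {x : Euc (k+1) | v x ≤ s} :=
      measurableSet_le hvm measurable_const
    have hcompl : {x : Euc (k+1) | s < v x} = {x : Euc (k+1) | v x ≤ s}ᶜ := by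
      ext x; simp [not_le]
    rw [hcompl]
    exact lintegral_le_on_compl_normClosed hgm hg0 hgv hB hBm
  have hNN : N ≤ N' := by
    rw [hN_def, hN'_def, lintegral_mul_ofReal_weight (hgm.ennreal_ofReal)
      (v := fun x => -v x) hvm.neg, lintegral_mul_ofReal_weight (hgsm.ennreal_ofReal) (v := fun x => -v x) hvm.neg]
    apply setLIntegral_mono' measurableSet_Ioi fun s hs => ?_
    rw [Set.mem_Ioi] at hs
    have hset : {x : Euc (k+1) | s < -v x} = {x : Euc (k+1) | v x < -s} := by
      ext x; simp only [Set.mem_setOf_eq]; constructor <;> intro h <;> linarith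
    have hB : NormClosed {x : Euc (k+1) | v x < -s} := by
      intro x hx y hy
      exact lt_of_le_of_lt (hVm (norm_nonneg y) (norm_nonneg x) hy) hx
    have hBm : MeasurableSet {x : Euc (k+1) | v x < -s} :=
      measurableSet_lt hvm measurable_const
    rw [hset]
    exact lintegral_le_on_normClosed hgm hg0 hgv hB hBm
  -- pointwise identifications of positive and negative parts
  have hgpos : ∀ x, ENNReal.ofReal (g x * v x) = ENNReal.ofReal (g x) * ENNReal.ofReal (v x) :=
    fun x => hofReal _ _ (hg0 x)
  have hgneg : ∀ x, ENNReal.ofReal (-(g x * v x))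
      = ENNReal.ofReal (g x) * ENNReal.ofReal (-v x) := by
    intro x; rw [← mul_neg]; exact hofReal _ _ (hg0 x)
  have hspos : ∀ x, ENNReal.ofReal (symmRearr g x * v x)
      = ENNReal.ofReal (symmRearr g x) * ENNReal.ofReal (v x) :=
    fun x => hofReal _ _ (symmRearr_nonneg x)
  have hsneg : ∀ x, ENNReal.ofReal (-(symmRearr g x * v x))
      = ENNReal.ofReal (symmRearr g x) * ENNReal.ofReal (-v x) := by
    intro x; rw [← mul_neg]; exact hofReal _ _ (symmRearr_nonneg x)
  -- finiteness
  have hPfin : P ≠ ⊤ := by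
    rw [hP_def, ← lintegral_congr hgpos]
    exact hi.lintegral_lt_top.ne
  have hNfin : N' ≠ ⊤ := by
    rw [hN'_def, ← lintegral_congr hsneg]
    simpa using hi'.neg.lintegral_lt_top.ne
  -- assemble
  rw [integral_eq_lintegral_pos_part_sub_lintegral_neg_part hi,
    integral_eq_lintegral_pos_part_sub_lintegral_neg_part hi']
  rw [lintegral_congr hgpos, lintegral_congr hgneg, lintegral_congr hspos,
    lintegral_congr hsneg]
  have h1 : P'.toReal ≤ P.toReal := ENNReal.toReal_mono hPfin hPP
  have h2 : N.toReal ≤ N'.toReal := ENNReal.toReal_mono hNfin hNN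
  exact sub_le_sub h1 h2

end Slice

def prodEquiv (m : ℕ) : (ℝ × Euc (m+1)) ≃ᵐ Euc (m+2) :=
  (MeasurableEquiv.prodCongr (MeasurableEquiv.refl ℝ)
      ((MeasurableEquiv.toLp 2 (Fin (m+1) → ℝ)).symm)).trans
    ((MeasurableEquiv.piFinSuccAbove (fun _ : Fin (m+2) => ℝ) 0).symm.trans
      (MeasurableEquiv.toLp 2 (Fin (m+2) → ℝ)).symm.symm)

lemma prodEquiv_measurePreserving (m : ℕ) :
    MeasurePreserving (prodEquiv m) ((volume : Measure ℝ).prod (volume : Measure (Euc (m+1))))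
      (volume : Measure (Euc (m+2))) := by
  have h1 : MeasurePreserving
      (MeasurableEquiv.prodCongr (MeasurableEquiv.refl ℝ)
        ((MeasurableEquiv.toLp 2 (Fin (m+1) → ℝ)).symm))
      ((volume : Measure ℝ).prod (volume : Measure (Euc (m+1))))
      ((volume : Measure ℝ).prod (volume : Measure (Fin (m+1) → ℝ))) :=
    (MeasurePreserving.id volume).prod
      (EuclideanSpace.volume_preserving_symm_measurableEquiv_toLp (Fin (m+1)))
  have h2 : MeasurePreserving (MeasurableEquiv.piFinSuccAbove (fun _ : Fin (m+2) => ℝ) 0).symm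
      ((volume : Measure ℝ).prod (volume : Measure (Fin (m+1) → ℝ)))
      (volume : Measure (Fin (m+2) → ℝ)) :=
    (volume_preserving_piFinSuccAbove (fun _ : Fin (m+2) => ℝ) 0).symm _
  have h3 : MeasurePreserving (MeasurableEquiv.toLp 2 (Fin (m+2) → ℝ)).symm.symm
      (volume : Measure (Fin (m+2) → ℝ)) (volume : Measure (Euc (m+2))) :=
    (EuclideanSpace.volume_preserving_symm_measurableEquiv_toLp (Fin (m+2))).symm _
  exact (h3.comp h2).comp h1

lemma prodEquiv_apply (m : ℕ) (a : ℝ) (y : Euc (m+1)) :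
    prodEquiv m (a, y) = (show Euc (m+2) from WithLp.toLp 2 (Fin.cons a (fun j => y j))) := by
  have step : prodEquiv m (a, y)
      = (MeasurableEquiv.toLp 2 (Fin (m+2) → ℝ)).symm.symm
          (Fin.insertNthEquiv (fun _ : Fin (m+2) => ℝ) 0 (a, fun j => y j)) := rfl
  rw [step]
  show WithLp.toLp 2 (Fin.insertNthEquiv (fun _ : Fin (m+2) => ℝ) 0 (a, fun j => y j) : Fin (m+2) → ℝ)
      = WithLp.toLp 2 (Fin.cons a (fun j => y j))
  rw [Fin.insertNthEquiv_zero]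
  rfl


section Bridge
variable {m : ℕ}

lemma steiner1_prodEquiv (f : Euc (m+2) → ℝ) (a : ℝ) (y : Euc (m+1)) :
    steiner1 f (prodEquiv m (a, y))
      = symmRearr (fun y' : Euc (m+1) => f (prodEquiv m (a, y'))) y := by
  have hfun : (fun y' : Euc (m+1) => f (prodEquiv m (a, y')))
      = (fun y' : Euc (m+1) => f (show Euc (m+2) from WithLp.toLp 2 (Fin.cons a (fun j => y' j)))) :=
    funext fun y' => by rw [prodEquiv_apply]
  rw [prodEquiv_apply, hfun]
  rfl

lemma w_prodEquiv (w : Euc (m+2) → ℝ) (W : ℝ → ℝ → ℝ)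
    (hwW : ∀ ξ : Euc (m+2), w ξ = W (ξ 0) ‖show Euc (m + 1) from WithLp.toLp 2 (fun j => ξ j.succ)‖)
    (a : ℝ) (y : Euc (m+1)) : w (prodEquiv m (a, y)) = W a ‖y‖ := by
  rw [hwW, prodEquiv_apply]
  rfl

end Bridge

theorem statement13 (m : ℕ) (f : Euc (m + 2) → ℝ)
    (hfm : Measurable f) (hf0 : ∀ x, 0 ≤ f x) (hfvan : VanishAtInfty f)
    (w : Euc (m + 2) → ℝ) (W : ℝ → ℝ → ℝ)
    (hwW : ∀ ξ : Euc (m + 2), w ξ = W (ξ 0) ‖show Euc (m + 1) from WithLp.toLp 2 (fun j => ξ j.succ)‖)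
    (hWc : ∀ a : ℝ, ContinuousOn (W a) (Set.Ici 0))
    (hWm : ∀ a : ℝ, StrictMonoOn (W a) (Set.Ici 0))
    (hint : Integrable (fun ξ => f ξ * w ξ) volume)
    (hint' : Integrable (fun ξ => steiner1 f ξ * w ξ) volume) :
    (∫ ξ : Euc (m + 2), steiner1 f ξ * w ξ) ≤ ∫ ξ : Euc (m + 2), f ξ * w ξ := by
  classical
  have hTmp := prodEquiv_measurePreserving m
  have hTemb : MeasurableEmbedding (prodEquiv m) := (prodEquiv m).measurableEmbedding
  have hint2 : Integrable (fun p : ℝ × Euc (m+1) => f (prodEquiv m p) * w (prodEquiv m p))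
      ((volume : Measure ℝ).prod (volume : Measure (Euc (m+1)))) :=
    (hTmp.integrable_comp_emb hTemb).mpr hint
  have hint2' : Integrable
      (fun p : ℝ × Euc (m+1) => steiner1 f (prodEquiv m p) * w (prodEquiv m p))
      ((volume : Measure ℝ).prod (volume : Measure (Euc (m+1)))) :=
    (hTmp.integrable_comp_emb hTemb).mpr hint'
  have hvan : ∀ᵐ a : ℝ, ∀ t : ℝ, 0 < t →
      volume {y : Euc (m+1) | t < f (prodEquiv m (a, y))} < ⊤ := by
    have hq : ∀ q : ℕ, ∀ᵐ a : ℝ,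
        volume {y : Euc (m+1) | 1/((q:ℝ)+1) < f (prodEquiv m (a, y))} < ⊤ := by
      intro q
      have hset : MeasurableSet {p : ℝ × Euc (m+1) | 1/((q:ℝ)+1) < f (prodEquiv m p)} :=
        measurableSet_lt measurable_const (hfm.comp (prodEquiv m).measurable)
      have hfin : ((volume : Measure ℝ).prod (volume : Measure (Euc (m+1))))
          {p : ℝ × Euc (m+1) | 1/((q:ℝ)+1) < f (prodEquiv m p)} < ⊤ := by
        have hpre : {p : ℝ × Euc (m+1) | 1/((q:ℝ)+1) < f (prodEquiv m p)}
            = (prodEquiv m) ⁻¹' {x : Euc (m+2) | 1/((q:ℝ)+1) < f x} := rfl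
        rw [hpre, hTmp.measure_preimage
          (measurableSet_lt measurable_const hfm).nullMeasurableSet]
        have := hfvan (1/((q:ℝ)+1)) (by positivity)
        rwa [lev_norm_eq hf0] at this
      rw [Measure.prod_apply hset] at hfin
      filter_upwards [ae_lt_top (measurable_measure_prodMk_left hset) hfin.ne] with a ha
      exact ha
    rw [← ae_all_iff] at hq
    filter_upwards [hq] with a ha t ht
    obtain ⟨q, hq'⟩ := exists_nat_one_div_lt ht
    exact lt_of_le_of_lt (measure_mono fun y hy => lt_trans hq' hy) (ha q)
  rw [← hTmp.integral_comp hTemb (fun ξ => steiner1 f ξ * w ξ),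
    ← hTmp.integral_comp hTemb (fun ξ => f ξ * w ξ)]
  rw [integral_prod _ hint2', integral_prod _ hint2]
  refine integral_mono_ae hint2'.integral_prod_left hint2.integral_prod_left ?_
  filter_upwards [hint2.prod_right_ae, hint2'.prod_right_ae, hvan] with a hIa hIa' hva
  have hg_eq : ∀ y, steiner1 f (prodEquiv m (a, y))
      = symmRearr (fun y' : Euc (m+1) => f (prodEquiv m (a, y'))) y :=
    steiner1_prodEquiv f a
  have hw_eq : ∀ y : Euc (m+1), w (prodEquiv m (a, y)) = W a ‖y‖ := w_prodEquiv w W hwW a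
  simp only [hg_eq, hw_eq] at hIa hIa' ⊢
  exact slice_ineq
    (hfm.comp ((prodEquiv m).measurable.comp measurable_prodMk_left))
    (fun y => hf0 _) hva (hWm a).monotoneOn (hWc a) hIa hIa'
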